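/- Simple stratified sampling is pairwise negatively dependent: if π is a uniformly random permutation of {1,...,N}, R_1,...,R_N are i.i.d. uniform on (0,1] independent of π, and p_j = (π(j) - R_j)/N, then for all q, r ∈ [0,1), P(p_1 ≥ q and p_2 ≥ r) ≤ (1-q)(1-r). -/
import Mathlib


open MeasureTheory ProbabilityTheory
open scoped ENNReal

noncomputable instance (n : ℕ) : MeasurableSpace (Equiv.Perm (Fin n)) := ⊤

/-- The uniform probability measure on a finite type. -/
noncomputable def unif (α : Type*) [Fintype α] [MeasurableSpace α] : Measure α :=
  (Fintype.card α : ENNReal)⁻¹ • Measure.count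

/-- Simple stratified sampling is pairwise negatively dependent:
if `π` is a uniformly random permutation of `{1,…,N}`, `R_1,…,R_N` are i.i.d. uniform on `(0,1]`
independent of `π`, and `p_j = (π(j) - R_j)/N`, then for all `q, r ∈ [0,1)`,
`P(p_1 ≥ q and p_2 ≥ r) ≤ (1-q)(1-r)`. -/
lemma clamp_sum_le (n : ℕ) (t : ℝ) (ht : 0 ≤ t) :
    ∑ i : Fin n, max 0 (min 1 (((i : ℕ) : ℝ) + 1 - t)) ≤ max 0 ((n : ℝ) - t) := by
  induction n with
  | zero => simp [ht]
  | succ n ih =>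
    rw [Fin.sum_univ_castSucc]
    simp only [Fin.coe_castSucc, Fin.val_last]
    push_cast
    rcases le_total t (n : ℝ) with h | h
    · have h1 : max 0 ((n : ℝ) - t) = (n : ℝ) - t := max_eq_right (by linarith)
      have h2 : max 0 ((n : ℝ) + 1 - t) = (n : ℝ) + 1 - t := max_eq_right (by linarith)
      have h3 : max 0 (min 1 ((n : ℝ) + 1 - t)) ≤ 1 := by
        apply max_le (by norm_num) (min_le_left _ _)
      rw [h2]; rw [h1] at ih; linarith
    · have h1 : max 0 ((n : ℝ) - t) = 0 := max_eq_left (by linarith)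
      have h3 : max 0 (min 1 ((n : ℝ) + 1 - t)) ≤ max 0 ((n : ℝ) + 1 - t) := by
        apply max_le_max le_rfl (min_le_right _ _)
      rw [h1] at ih; linarith [le_max_left (0:ℝ) ((n : ℝ) + 1 - t)]

lemma perm_sum_eq (M : ℕ) (a b : Fin (M+2) → ℝ) :
    ∑ π : Equiv.Perm (Fin (M+2)), a (π 0) * b (π 1)
      = (M.factorial : ℝ) * ((∑ i, a i) * (∑ i, b i) - ∑ i, a i * b i) := by
  have inner : ∀ p : Fin (M+2),
      ∑ e : Equiv.Perm (Fin (M+1)), b (Equiv.swap 0 p ((e 0).succ))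
        = (M.factorial : ℝ) * ((∑ i, b i) - b p) := by
    intro p
    rw [← Equiv.sum_comp (Equiv.Perm.decomposeFin.symm)
      (fun e : Equiv.Perm (Fin (M+1)) => b (Equiv.swap 0 p ((e 0).succ)))]
    rw [Fintype.sum_prod_type]
    simp only [Equiv.Perm.decomposeFin_symm_apply_zero, Finset.sum_const,
      Finset.card_univ, Fintype.card_perm, Fintype.card_fin, nsmul_eq_mul]
    rw [← Finset.mul_sum]
    congr 1
    have h := Fin.sum_univ_succ (fun j : Fin (M+2) => b (Equiv.swap 0 p j))
    rw [Equiv.sum_comp (Equiv.swap 0 p) b] at h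
    simp only [Equiv.swap_apply_left] at h
    linarith
  rw [← Equiv.sum_comp (Equiv.Perm.decomposeFin.symm)
    (fun π : Equiv.Perm (Fin (M+2)) => a (π 0) * b (π 1))]
  rw [Fintype.sum_prod_type]
  simp only [Equiv.Perm.decomposeFin_symm_apply_zero,
    Equiv.Perm.decomposeFin_symm_apply_one, ← Finset.mul_sum, inner]
  rw [Finset.sum_congr rfl (fun p _ => by ring :
    ∀ p ∈ Finset.univ, a p * ((M.factorial : ℝ) * ((∑ i, b i) - b p))
      = (M.factorial : ℝ) * (a p * (∑ i, b i)) - (M.factorial : ℝ) * (a p * b p))]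
  rw [Finset.sum_sub_distrib, ← Finset.mul_sum, ← Finset.mul_sum, ← Finset.sum_mul]
  ring

lemma real_key (M : ℕ) (q r : ℝ) (hq : q ∈ Set.Ico (0:ℝ) 1) (hr : r ∈ Set.Ico (0:ℝ) 1) :
    ∑ π : Equiv.Perm (Fin (M+2)),
      max 0 (min 1 (((π 0 : Fin (M+2)) : ℝ) + 1 - q*((M:ℝ)+2)))
        * max 0 (min 1 (((π 1 : Fin (M+2)) : ℝ) + 1 - r*((M:ℝ)+2)))
      ≤ ((M+2).factorial : ℝ) * ((1-q)*(1-r)) := by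
  obtain ⟨hq0, hq1⟩ := hq
  obtain ⟨hr0, hr1⟩ := hr
  set a : Fin (M+2) → ℝ := fun i => max 0 (min 1 ((i : ℝ) + 1 - q*((M:ℝ)+2))) with ha
  set b : Fin (M+2) → ℝ := fun i => max 0 (min 1 ((i : ℝ) + 1 - r*((M:ℝ)+2))) with hb
  have amono : Monotone a := by
    intro i j hij
    simp only [ha]
    gcongr
    exact_mod_cast hij
  have bmono : Monotone b := by
    intro i j hij
    simp only [hb]
    gcongr
    exact_mod_cast hij
  have hmono : Monovary a b := fun i j h =>
    amono ((le_or_gt i j).resolve_right (fun hji => h.not_ge (bmono hji.le)))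
  have cheb := hmono.sum_mul_sum_le_card_mul_sum
  rw [Fintype.card_fin] at cheb
  push_cast at cheb
  have hA' : ∑ i, a i ≤ ((M:ℝ)+2)*(1-q) := by
    have h := clamp_sum_le (M+2) (q*((M:ℝ)+2)) (by positivity)
    push_cast at h
    calc ∑ i, a i ≤ max 0 (((M:ℝ)+2) - q*((M:ℝ)+2)) := h
      _ = ((M:ℝ)+2)*(1-q) := by rw [max_eq_right (by nlinarith)]; ring
  have hB' : ∑ i, b i ≤ ((M:ℝ)+2)*(1-r) := by
    have h := clamp_sum_le (M+2) (r*((M:ℝ)+2)) (by positivity)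
    push_cast at h
    calc ∑ i, b i ≤ max 0 (((M:ℝ)+2) - r*((M:ℝ)+2)) := h
      _ = ((M:ℝ)+2)*(1-r) := by rw [max_eq_right (by nlinarith)]; ring
  have hA0 : (0:ℝ) ≤ ∑ i, a i := Finset.sum_nonneg fun i _ => le_max_left _ _
  have hB0 : (0:ℝ) ≤ ∑ i, b i := Finset.sum_nonneg fun i _ => le_max_left _ _
  show ∑ π : Equiv.Perm (Fin (M+2)), a (π 0) * b (π 1) ≤ _
  rw [perm_sum_eq]
  have hfact : (((M+2).factorial : ℕ) : ℝ)
      = ((M:ℝ)+2)*(((M:ℝ)+1)*(M.factorial : ℝ)) := by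
    rw [Nat.factorial_succ, Nat.factorial_succ]
    push_cast
    ring
  have npos : (0:ℝ) < (M:ℝ)+2 := by positivity
  apply le_of_mul_le_mul_left _ npos
  calc ((M:ℝ)+2) * ((M.factorial : ℝ) * ((∑ i, a i) * (∑ i, b i) - ∑ i, a i * b i))
      = (M.factorial : ℝ) * (((M:ℝ)+2)*((∑ i, a i) * (∑ i, b i)) - ((M:ℝ)+2)*(∑ i, a i * b i)) := by
        ring
    _ ≤ (M.factorial : ℝ) * ((((M:ℝ)+1))*((∑ i, a i) * (∑ i, b i))) := by
        apply mul_le_mul_of_nonneg_left (by linarith) (by positivity)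
    _ ≤ (M.factorial : ℝ) * ((((M:ℝ)+1))*((((M:ℝ)+2)*(1-q)) * (((M:ℝ)+2)*(1-r)))) := by
        apply mul_le_mul_of_nonneg_left _ (by positivity)
        apply mul_le_mul_of_nonneg_left _ (by positivity)
        exact mul_le_mul hA' hB' hB0 (by nlinarith)
    _ = ((M:ℝ)+2) * ((((M+2).factorial : ℕ) : ℝ) * ((1-q)*(1-r))) := by
        rw [hfact]; ring

lemma m_Iic (c : ℝ) : (volume.restrict (Set.Ioc (0:ℝ) 1)) (Set.Iic c)
    = ENNReal.ofReal (max 0 (min 1 c)) := by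
  rw [Measure.restrict_apply measurableSet_Iic]
  have h : Set.Iic c ∩ Set.Ioc (0:ℝ) 1 = Set.Ioc 0 (min 1 c) := by
    ext x
    simp only [Set.mem_inter_iff, Set.mem_Iic, Set.mem_Ioc, le_min_iff]
    tauto
  rw [h, Real.volume_Ioc]
  rcases le_total (min 1 c) 0 with h'|h'
  · rw [max_eq_left h', ENNReal.ofReal_of_nonpos (by linarith), ENNReal.ofReal_zero]
  · rw [max_eq_right h', sub_zero]

lemma slice_eq (M : ℕ) (c0 c1 : ℝ) :
    Measure.pi (fun _ : Fin (M+2) => volume.restrict (Set.Ioc (0:ℝ) 1))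
      {x : Fin (M+2) → ℝ | x 0 ≤ c0 ∧ x 1 ≤ c1}
    = ENNReal.ofReal (max 0 (min 1 c0)) * ENNReal.ofReal (max 0 (min 1 c1)) := by
  have h10 : (1 : Fin (M+2)) ≠ 0 := by simp [Fin.ext_iff]
  have hset : {x : Fin (M+2) → ℝ | x 0 ≤ c0 ∧ x 1 ≤ c1}
      = Set.pi Set.univ (fun i => if i = 0 then Set.Iic c0
          else if i = 1 then Set.Iic c1 else Set.univ) := by
    ext x
    simp only [Set.mem_setOf_eq, Set.mem_pi, Set.mem_univ, true_implies]
    constructor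
    · rintro ⟨h0, h1⟩ i
      by_cases hi0 : i = 0
      · subst hi0; simpa using h0
      by_cases hi1 : i = 1
      · subst hi1; simp only [if_neg h10, if_pos rfl]; exact h1
      · simp [hi0, hi1]
    · intro h
      refine ⟨by simpa using h 0, ?_⟩
      have := h 1
      rwa [if_neg h10, if_pos rfl] at this
  rw [hset, Measure.pi_pi]
  have m_univ : (volume.restrict (Set.Ioc (0:ℝ) 1)) Set.univ = 1 := by
    simp [Real.volume_Ioc]
  rw [← Finset.mul_prod_erase Finset.univ _ (Finset.mem_univ (0 : Fin (M+2)))]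
  rw [← Finset.mul_prod_erase _ _
    (Finset.mem_erase.mpr ⟨h10, Finset.mem_univ (1 : Fin (M+2))⟩)]
  rw [if_pos rfl, if_neg h10, if_pos rfl]
  have hrest : ∏ i ∈ (Finset.univ.erase (0 : Fin (M+2))).erase 1,
      (volume.restrict (Set.Ioc (0:ℝ) 1)) (if i = 0 then Set.Iic c0
        else if i = 1 then Set.Iic c1 else Set.univ) = 1 := by
    apply Finset.prod_eq_one
    intro i hi
    simp only [Finset.mem_erase, Finset.mem_univ, and_true] at hi
    obtain ⟨hi1, hi0⟩ := hi
    rw [if_neg hi0, if_neg hi1, m_univ]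
  rw [hrest, mul_one, m_Iic, m_Iic]

theorem stratified_sampling_pairwise_negatively_dependent
    (N : ℕ) (hN : 2 ≤ N)
    (μ : Measure (Equiv.Perm (Fin N) × (Fin N → ℝ)))
    (hμ : μ = (unif (Equiv.Perm (Fin N))).prod
      (Measure.pi fun _ : Fin N => volume.restrict (Set.Ioc (0 : ℝ) 1)))
    (p : Fin N → (Equiv.Perm (Fin N) × (Fin N → ℝ)) → ℝ)
    (hp : ∀ j ω, p j ω = (((ω.1 j : ℕ) + 1 : ℝ) - ω.2 j) / N)
    (q r : ℝ) (hq : q ∈ Set.Ico (0 : ℝ) 1) (hr : r ∈ Set.Ico (0 : ℝ) 1) :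
    μ {ω | q ≤ p ⟨0, by omega⟩ ω ∧ r ≤ p ⟨1, by omega⟩ ω}
      ≤ ENNReal.ofReal ((1 - q) * (1 - r)) := by
  obtain ⟨M, rfl⟩ : ∃ M, N = M + 2 := ⟨N - 2, by omega⟩
  subst hμ
  have h0 : (⟨0, by omega⟩ : Fin (M+2)) = 0 := by apply Fin.ext; simp
  have h1 : (⟨1, by omega⟩ : Fin (M+2)) = 1 := by apply Fin.ext; simp
  rw [h0, h1]
  haveI : IsProbabilityMeasure (volume.restrict (Set.Ioc (0:ℝ) 1)) :=
    ⟨by simp [Real.volume_Ioc]⟩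
  haveI : MeasurableSingletonClass (Equiv.Perm (Fin (M+2))) := ⟨fun _ => trivial⟩
  have hN0 : (0:ℝ) < (M:ℝ) + 2 := by positivity
  have hE : {ω | q ≤ p 0 ω ∧ r ≤ p 1 ω}
      = {ω : Equiv.Perm (Fin (M+2)) × (Fin (M+2) → ℝ) |
          ω.2 0 ≤ ((ω.1 0 : ℕ) : ℝ) + 1 - q * ((M:ℝ)+2) ∧
          ω.2 1 ≤ ((ω.1 1 : ℕ) : ℝ) + 1 - r * ((M:ℝ)+2)} := by
    ext ω
    simp only [Set.mem_setOf_eq, hp]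
    have hc : ((M+2 : ℕ) : ℝ) = (M:ℝ)+2 := by push_cast; ring
    rw [hc, le_div_iff₀ hN0, le_div_iff₀ hN0]
    constructor <;> rintro ⟨u, v⟩ <;> constructor <;> linarith
  rw [hE]
  have hmeasE : MeasurableSet {ω : Equiv.Perm (Fin (M+2)) × (Fin (M+2) → ℝ) |
      ω.2 0 ≤ ((ω.1 0 : ℕ) : ℝ) + 1 - q * ((M:ℝ)+2) ∧
      ω.2 1 ≤ ((ω.1 1 : ℕ) : ℝ) + 1 - r * ((M:ℝ)+2)} := by
    have hc0 : Measurable (fun π : Equiv.Perm (Fin (M+2)) =>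
        ((π 0 : ℕ):ℝ) + 1 - q*((M:ℝ)+2)) := measurable_from_top
    have hc1 : Measurable (fun π : Equiv.Perm (Fin (M+2)) =>
        ((π 1 : ℕ):ℝ) + 1 - r*((M:ℝ)+2)) := measurable_from_top
    apply MeasurableSet.inter
    · exact measurableSet_le ((measurable_pi_apply 0).comp measurable_snd)
        (hc0.comp measurable_fst)
    · exact measurableSet_le ((measurable_pi_apply 1).comp measurable_snd)
        (hc1.comp measurable_fst)
  rw [Measure.prod_apply hmeasE]
  have hslice : ∀ π : Equiv.Perm (Fin (M+2)),
      (Measure.pi fun _ : Fin (M+2) => volume.restrict (Set.Ioc (0 : ℝ) 1))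
        (Prod.mk π ⁻¹' {ω : Equiv.Perm (Fin (M+2)) × (Fin (M+2) → ℝ) |
          ω.2 0 ≤ ((ω.1 0 : ℕ) : ℝ) + 1 - q * ((M:ℝ)+2) ∧
          ω.2 1 ≤ ((ω.1 1 : ℕ) : ℝ) + 1 - r * ((M:ℝ)+2)})
      = ENNReal.ofReal ((max 0 (min 1 (((π 0 : ℕ):ℝ) + 1 - q*((M:ℝ)+2))))
          * (max 0 (min 1 (((π 1 : ℕ):ℝ) + 1 - r*((M:ℝ)+2))))) := by
    intro π
    have hpre : Prod.mk π ⁻¹' {ω : Equiv.Perm (Fin (M+2)) × (Fin (M+2) → ℝ) |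
          ω.2 0 ≤ ((ω.1 0 : ℕ) : ℝ) + 1 - q * ((M:ℝ)+2) ∧
          ω.2 1 ≤ ((ω.1 1 : ℕ) : ℝ) + 1 - r * ((M:ℝ)+2)}
        = {x : Fin (M+2) → ℝ | x 0 ≤ ((π 0 : ℕ):ℝ) + 1 - q*((M:ℝ)+2)
            ∧ x 1 ≤ ((π 1 : ℕ):ℝ) + 1 - r*((M:ℝ)+2)} := rfl
    rw [hpre, slice_eq, ← ENNReal.ofReal_mul (le_max_left _ _)]
  simp only [hslice]
  simp only [unif]
  rw [lintegral_smul_measure, lintegral_count, tsum_fintype,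
    Fintype.card_perm, Fintype.card_fin]
  rw [← ENNReal.ofReal_sum_of_nonneg
    (fun π _ => mul_nonneg (le_max_left _ _) (le_max_left _ _))]
  have hK0 : (((M+2).factorial : ℕ) : ℝ≥0∞) ≠ 0 :=
    Nat.cast_ne_zero.mpr (Nat.factorial_ne_zero _)
  have hKt : (((M+2).factorial : ℕ) : ℝ≥0∞) ≠ ⊤ := ENNReal.natCast_ne_top _
  calc (((M+2).factorial : ℕ) : ℝ≥0∞)⁻¹
        * ENNReal.ofReal (∑ π : Equiv.Perm (Fin (M+2)),
            (max 0 (min 1 (((π 0 : ℕ):ℝ) + 1 - q*((M:ℝ)+2))))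
              * (max 0 (min 1 (((π 1 : ℕ):ℝ) + 1 - r*((M:ℝ)+2)))))
      ≤ (((M+2).factorial : ℕ) : ℝ≥0∞)⁻¹
        * ((((M+2).factorial : ℕ) : ℝ≥0∞) * ENNReal.ofReal ((1-q)*(1-r))) := by
        apply mul_le_mul_right
        rw [← ENNReal.ofReal_natCast, ← ENNReal.ofReal_mul (by positivity)]
        exact ENNReal.ofReal_le_ofReal (real_key M q r hq hr)
    _ = ENNReal.ofReal ((1-q)*(1-r)) := by
        rw [← mul_assoc, ENNReal.inv_mul_cancel hK0 hKt, one_mul]
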